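/- Let {y_s}, {u_s}, {a_s}, {b_s} be nonnegative random variables adapted to a filtration {F_s} such that almost surely ∑_s a_s < ∞ and ∑_s b_s < ∞, and for all s, E[y_{s+1} | F_s] ≤ (1 + a_s) y_s - u_s + b_s. Then almost surely {y_s} converges and ∑_s u_s < ∞. -/

import Mathlib

open MeasureTheory Filter Finset

set_option linter.unusedSectionVars false
namespace RS

variable {Ω : Type*}

noncomputable def A (a : ℕ → Ω → ℝ) (s : ℕ) (ω : Ω) : ℝ := ∏ t ∈ Finset.range s, (1 + a t ω)

noncomputable def Bp (a b : ℕ → Ω → ℝ) (s : ℕ) (ω : Ω) : ℝ :=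
  ∑ t ∈ Finset.range s, b t ω / A a (t + 1) ω

noncomputable def Z (a y : ℕ → Ω → ℝ) (s : ℕ) (ω : Ω) : ℝ := y s ω / A a s ω

noncomputable def X (a b u y : ℕ → Ω → ℝ) (s : ℕ) (ω : Ω) : ℝ :=
  Z a y s ω + Bp a u s ω - Bp a b s ω

noncomputable def phi (a b : ℕ → Ω → ℝ) (k : ℕ) (s : ℕ) (ω : Ω) : ℝ :=
  if Bp a b (s + 1) ω ≤ (k : ℝ) then 1 else 0

noncomputable def X' (a b u y : ℕ → Ω → ℝ) (k : ℕ) (s : ℕ) (ω : Ω) : ℝ :=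
  y 0 ω + ∑ t ∈ Finset.range s, phi a b k t ω * (X a b u y (t + 1) ω - X a b u y t ω)

section facts
variable {a b u y : ℕ → Ω → ℝ}

lemma A_one_le (ha0 : ∀ s ω, 0 ≤ a s ω) (s : ℕ) (ω : Ω) : 1 ≤ A a s ω := by
  have h := Finset.prod_le_prod (f := fun _ : ℕ => (1:ℝ)) (g := fun t => 1 + a t ω)
    (s := Finset.range s) (fun t _ => zero_le_one) (fun t _ => by show (1:ℝ) ≤ 1 + a t ω; linarith [ha0 t ω])
  simpa [A] using h

lemma A_pos (ha0 : ∀ s ω, 0 ≤ a s ω) (s : ℕ) (ω : Ω) : 0 < A a s ω :=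
  lt_of_lt_of_le one_pos (A_one_le ha0 s ω)

lemma A_succ (s : ℕ) (ω : Ω) : A a (s + 1) ω = A a s ω * (1 + a s ω) :=
  Finset.prod_range_succ _ _

lemma A_mono (ha0 : ∀ s ω, 0 ≤ a s ω) (ω : Ω) : Monotone fun s => A a s ω := by
  refine monotone_nat_of_le_succ fun s => ?_
  rw [A_succ]
  nlinarith [A_pos ha0 s ω, ha0 s ω]

lemma Bp_mono (hb0 : ∀ s ω, 0 ≤ b s ω) (ha0 : ∀ s ω, 0 ≤ a s ω) (ω : Ω) :
    Monotone fun s => Bp a b s ω := by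
  refine monotone_nat_of_le_succ fun s => ?_
  have : Bp a b (s + 1) ω = Bp a b s ω + b s ω / A a (s + 1) ω := Finset.sum_range_succ _ _
  rw [this]
  have := div_nonneg (hb0 s ω) (A_pos ha0 (s + 1) ω).le
  linarith

lemma Bp_nonneg (hb0 : ∀ s ω, 0 ≤ b s ω) (ha0 : ∀ s ω, 0 ≤ a s ω) (s : ℕ) (ω : Ω) :
    0 ≤ Bp a b s ω :=
  Finset.sum_nonneg fun t _ => div_nonneg (hb0 t ω) (A_pos ha0 (t + 1) ω).le

lemma Z_nonneg (hy0 : ∀ s ω, 0 ≤ y s ω) (ha0 : ∀ s ω, 0 ≤ a s ω) (s : ℕ) (ω : Ω) :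
    0 ≤ Z a y s ω := div_nonneg (hy0 s ω) (A_pos ha0 s ω).le

lemma Z_le (hy0 : ∀ s ω, 0 ≤ y s ω) (ha0 : ∀ s ω, 0 ≤ a s ω) (s : ℕ) (ω : Ω) :
    Z a y s ω ≤ y s ω := by
  rw [Z, div_le_iff₀ (A_pos ha0 s ω)]
  nlinarith [hy0 s ω, A_one_le ha0 s ω]

end facts

section meas
variable {m0 : MeasurableSpace Ω} {ℱ : Filtration ℕ m0} {a b u y : ℕ → Ω → ℝ}

lemma A_meas (ha : Adapted ℱ a) {s t : ℕ} (h : t ≤ s + 1) : Measurable[ℱ s] (A a t) := by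
  unfold A
  exact Finset.measurable_prod _ fun i hi =>
    measurable_const.add ((ha i).mono (ℱ.mono (by
      simp only [Finset.mem_range] at hi; omega)) le_rfl)

lemma Bp_meas (ha : Adapted ℱ a) (hb : Adapted ℱ b) {s t : ℕ} (h : t ≤ s + 1) :
    Measurable[ℱ s] (Bp a b t) := by
  unfold Bp
  refine Finset.measurable_sum _ fun i hi => ?_
  simp only [Finset.mem_range] at hi
  exact ((hb i).mono (ℱ.mono (by omega)) le_rfl).div (A_meas ha (by omega))

lemma Z_meas (ha : Adapted ℱ a) (hy : Adapted ℱ y) {s t : ℕ} (h : t ≤ s) :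
    Measurable[ℱ s] (Z a y t) := by
  unfold Z
  exact ((hy t).mono (ℱ.mono h) le_rfl).div (A_meas ha (by omega))

lemma X_meas (ha : Adapted ℱ a) (hb : Adapted ℱ b) (hu : Adapted ℱ u) (hy : Adapted ℱ y)
    {s t : ℕ} (h : t ≤ s) : Measurable[ℱ s] (X a b u y t) := by
  unfold X
  exact ((Z_meas ha hy h).add (Bp_meas ha hu (by omega))).sub (Bp_meas ha hb (by omega))

lemma phi_meas (ha : Adapted ℱ a) (hb : Adapted ℱ b) {k s t : ℕ} (h : t ≤ s) :
    Measurable[ℱ s] (phi a b k t) := by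
  unfold phi
  exact Measurable.ite (measurableSet_le (Bp_meas ha hb (by omega)) measurable_const)
    measurable_const measurable_const

lemma X'_meas (ha : Adapted ℱ a) (hb : Adapted ℱ b) (hu : Adapted ℱ u) (hy : Adapted ℱ y)
    {k s : ℕ} : Measurable[ℱ s] (X' a b u y k s) := by
  unfold X'
  refine ((hy 0).mono (ℱ.mono (Nat.zero_le s)) le_rfl).add ?_
  refine Finset.measurable_sum _ fun i hi => ?_
  simp only [Finset.mem_range] at hi
  exact (phi_meas ha hb (by omega)).mul
    ((X_meas ha hb hu hy (by omega)).sub (X_meas ha hb hu hy (by omega)))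

end meas

section ptwise
variable {a b u y : ℕ → Ω → ℝ}

lemma phi_cases (k s : ℕ) (ω : Ω) : phi a b k s ω = 0 ∨ phi a b k s ω = 1 := by
  unfold phi; split <;> simp

lemma X'_succ (k s : ℕ) (ω : Ω) : X' a b u y k (s + 1) ω
    = X' a b u y k s ω + phi a b k s ω * (X a b u y (s + 1) ω - X a b u y s ω) := by
  unfold X'; rw [Finset.sum_range_succ]; ring

lemma X_diff (s : ℕ) (ω : Ω) : X a b u y (s + 1) ω - X a b u y s ω
    = Z a y (s + 1) ω - Z a y s ω + u s ω / A a (s + 1) ω - b s ω / A a (s + 1) ω := by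
  unfold X Bp
  rw [Finset.sum_range_succ, Finset.sum_range_succ (fun t => b t ω / A a (t + 1) ω)]
  ring

lemma stopped (hy0 : ∀ s ω, 0 ≤ y s ω) (hu0 : ∀ s ω, 0 ≤ u s ω)
    (ha0 : ∀ s ω, 0 ≤ a s ω) (hb0 : ∀ s ω, 0 ≤ b s ω) (k s : ℕ) (ω : Ω) :
    (Bp a b s ω ≤ (k : ℝ) → X' a b u y k s ω = X a b u y s ω) ∧
      -(k : ℝ) ≤ X' a b u y k s ω := by
  induction s with
  | zero =>
    have h0 : X' a b u y k 0 ω = y 0 ω := by simp [X']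
    have h0' : X a b u y 0 ω = y 0 ω := by simp [X, Z, Bp, A]
    refine ⟨fun _ => by rw [h0, h0'], ?_⟩
    rw [h0]
    have := hy0 0 ω
    have : (0:ℝ) ≤ (k:ℝ) := Nat.cast_nonneg k
    linarith [hy0 0 ω]
  | succ s ih =>
    rw [X'_succ]
    by_cases hc : Bp a b (s + 1) ω ≤ (k : ℝ)
    · have hphi : phi a b k s ω = 1 := if_pos hc
      have hBs : Bp a b s ω ≤ (k : ℝ) := le_trans (Bp_mono hb0 ha0 ω (Nat.le_succ s)) hc
      have h1 := ih.1 hBs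
      have hXk : -(k : ℝ) ≤ X a b u y (s + 1) ω := by
        have hz := Z_nonneg hy0 ha0 (s + 1) ω
        have hv := Bp_nonneg hu0 ha0 (s + 1) (ω := ω)
        unfold X; linarith
      exact ⟨fun _ => by rw [hphi, h1]; ring, by rw [hphi, h1]; simpa using hXk⟩
    · have hphi : phi a b k s ω = 0 := if_neg hc
      exact ⟨fun hcon => absurd hcon hc, by rw [hphi]; simpa using ih.2⟩

lemma bA_le {k : ℕ} (ha0 : ∀ s ω, 0 ≤ a s ω) (hb0 : ∀ s ω, 0 ≤ b s ω)
    {s : ℕ} {ω : Ω} (hc : Bp a b (s + 1) ω ≤ (k : ℝ)) :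
    b s ω / A a (s + 1) ω ≤ (k : ℝ) := by
  have h1 : Bp a b (s + 1) ω = Bp a b s ω + b s ω / A a (s + 1) ω := Finset.sum_range_succ _ _
  have h2 := Bp_nonneg hb0 ha0 s (ω := ω)
  linarith

lemma uA_le (ha0 : ∀ s ω, 0 ≤ a s ω) (hy0 : ∀ s ω, 0 ≤ y s ω)
    {s : ℕ} {ω : Ω} (hub : u s ω ≤ (1 + a s ω) * y s ω + b s ω) :
    u s ω / A a (s + 1) ω ≤ y s ω + b s ω / A a (s + 1) ω := by
  have hP := A_pos ha0 (s + 1) ω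
  have hQ := A_pos ha0 s ω
  have hkey : (1 + a s ω) * y s ω / A a (s + 1) ω = y s ω / A a s ω := by
    rw [A_succ]
    have h1 : (1 : ℝ) + a s ω > 0 := by linarith [ha0 s ω]
    field_simp
  have h2 : u s ω / A a (s + 1) ω
      ≤ ((1 + a s ω) * y s ω + b s ω) / A a (s + 1) ω := by gcongr
  have h3 : ((1 + a s ω) * y s ω + b s ω) / A a (s + 1) ω
      = (1 + a s ω) * y s ω / A a (s + 1) ω + b s ω / A a (s + 1) ω := add_div _ _ _
  have h4 : y s ω / A a s ω ≤ y s ω := Z_le hy0 ha0 s ω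
  linarith

end ptwise

section prob

variable {m0 : MeasurableSpace Ω} (μ : Measure Ω) [IsProbabilityMeasure μ]
  {ℱ : Filtration ℕ m0} {a b u y : ℕ → Ω → ℝ}

variable (hy : Adapted ℱ y) (hu : Adapted ℱ u) (ha : Adapted ℱ a) (hb : Adapted ℱ b)
  (hy0 : ∀ s ω, 0 ≤ y s ω) (hu0 : ∀ s ω, 0 ≤ u s ω)
  (ha0 : ∀ s ω, 0 ≤ a s ω) (hb0 : ∀ s ω, 0 ≤ b s ω)
  (hyint : ∀ s, Integrable (y s) μ)
  (hrec : ∀ s, μ[y (s+1) | ℱ s]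
      ≤ᵐ[μ] fun ω => (1 + a s ω) * y s ω - u s ω + b s ω)

include hy0 hrec in
lemma u_bound : ∀ᵐ ω ∂μ, ∀ s, u s ω ≤ (1 + a s ω) * y s ω + b s ω := by
  rw [MeasureTheory.ae_all_iff]
  intro s
  have h0 : (0 : Ω → ℝ) ≤ᵐ[μ] μ[y (s+1) | ℱ s] :=
    condExp_nonneg (ae_of_all _ fun ω => hy0 (s+1) ω)
  filter_upwards [hrec s, h0] with ω h1 h2
  simp only [Pi.zero_apply] at h2
  linarith

include hy hu ha hb hy0 hu0 ha0 hb0 hyint hrec in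
lemma int_d (k s : ℕ) :
    Integrable (fun ω => phi a b k s ω * (X a b u y (s + 1) ω - X a b u y s ω)) μ := by
  refine Integrable.mono' (g := fun ω => y (s + 1) ω + 2 * y s ω + 2 * (k : ℝ))
    (((hyint (s+1)).add ((hyint s).const_mul 2)).add (integrable_const _)) ?_ ?_
  · exact (((phi_meas (s := s+1) (t := s) ha hb (by omega)).mul
      ((X_meas (s := s+1) (t := s+1) ha hb hu hy le_rfl).sub
      (X_meas (s := s+1) (t := s) ha hb hu hy (by omega)))).mono
      (ℱ.le (s+1)) le_rfl).stronglyMeasurable.aestronglyMeasurable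
  · filter_upwards [u_bound μ hy0 hrec] with ω hub
    have hk : (0:ℝ) ≤ (k:ℝ) := Nat.cast_nonneg k
    rcases phi_cases (a := a) (b := b) k s ω with h | h
    · rw [h]; simp only [zero_mul, norm_zero]
      linarith [hy0 (s+1) ω, hy0 s ω]
    · have hc : Bp a b (s + 1) ω ≤ (k:ℝ) := by
        by_contra hcon; simp [phi, hcon] at h
      rw [h, one_mul, X_diff, Real.norm_eq_abs, abs_le]
      have hbA := bA_le (a := a) ha0 hb0 hc
      have huA := uA_le ha0 hy0 (hub s)
      have hbA0 : 0 ≤ b s ω / A a (s + 1) ω :=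
        div_nonneg (hb0 s ω) (A_pos ha0 (s+1) ω).le
      have huA0 : 0 ≤ u s ω / A a (s + 1) ω :=
        div_nonneg (hu0 s ω) (A_pos ha0 (s+1) ω).le
      have hz1 := Z_nonneg hy0 ha0 (s+1) (ω := ω)
      have hz1' := Z_le hy0 ha0 (s+1) ω
      have hz2 := Z_nonneg hy0 ha0 s (ω := ω)
      have hz2' := Z_le hy0 ha0 s ω
      constructor <;> nlinarith [hy0 (s+1) ω, hy0 s ω]

include hy hu ha hb hy0 hu0 ha0 hb0 hyint hrec in
lemma int_X' (k s : ℕ) : Integrable (X' a b u y k s) μ := by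
  have : X' a b u y k s = fun ω => y 0 ω +
      ∑ t ∈ Finset.range s, phi a b k t ω * (X a b u y (t + 1) ω - X a b u y t ω) := rfl
  rw [this]
  exact (hyint 0).add (integrable_finset_sum _ fun t _ =>
    int_d μ hy hu ha hb hy0 hu0 ha0 hb0 hyint hrec k t)

include hy hu ha hb hy0 hu0 ha0 hb0 hyint hrec in
lemma superm (k : ℕ) : Supermartingale (X' a b u y k) ℱ μ := by
  have intX' := fun s => int_X' μ hy hu ha hb hy0 hu0 ha0 hb0 hyint hrec k s
  refine supermartingale_nat (fun s => (X'_meas ha hb hu hy).stronglyMeasurable)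
    intX' (fun s => ?_)
  set g : Ω → ℝ := fun ω => phi a b k s ω / A a (s + 1) ω with hgdef
  set h : Ω → ℝ := fun ω => phi a b k s ω *
    (u s ω / A a (s + 1) ω - b s ω / A a (s + 1) ω - Z a y s ω) with hhdef
  have hg01 : ∀ ω, 0 ≤ g ω ∧ g ω ≤ 1 := by
    intro ω
    have hA1 := A_one_le ha0 (s + 1) ω
    rcases phi_cases (a := a) (b := b) k s ω with hp | hp <;>
      rw [hgdef] <;> simp only [hp] <;> constructor
    · simp
    · simp
    · positivity
    · rw [div_le_one (by linarith)]; linarith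
  have hdec : X' a b u y k (s + 1)
      = X' a b u y k s + ((g * y (s + 1)) + h) := by
    funext ω
    simp only [Pi.add_apply, Pi.mul_apply]
    rw [X'_succ, X_diff, hgdef, hhdef]
    have hZ : Z a y (s + 1) ω = y (s + 1) ω / A a (s + 1) ω := rfl
    have hP : A a (s + 1) ω ≠ 0 := (A_pos ha0 (s + 1) ω).ne'
    rw [hZ]
    field_simp
    ring
  have hg_meas : Measurable[ℱ s] g :=
    (phi_meas (t := s) ha hb le_rfl).div (A_meas ha le_rfl)
  have hh_meas : Measurable[ℱ s] h := by
    refine (phi_meas (t := s) ha hb le_rfl).mul ?_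
    exact (((hu s).div (A_meas ha le_rfl)).sub
      ((hb s).div (A_meas ha le_rfl))).sub (Z_meas ha hy le_rfl)
  have int_gy : Integrable (g * y (s + 1)) μ := by
    refine Integrable.mono' (hyint (s + 1))
      (((hg_meas.mono (ℱ.le s) le_rfl).mul
        ((hy (s+1)).mono (ℱ.le (s+1)) le_rfl)).stronglyMeasurable.aestronglyMeasurable)
      (ae_of_all _ fun ω => ?_)
    have := hg01 ω
    have := hy0 (s + 1) ω
    rw [Pi.mul_apply, Real.norm_eq_abs, abs_of_nonneg (by nlinarith)]
    nlinarith
  have int_h : Integrable h μ := by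
    refine Integrable.mono' (g := fun ω => 2 * y s ω + 2 * (k : ℝ))
      (((hyint s).const_mul 2).add (integrable_const _))
      ((hh_meas.mono (ℱ.le s) le_rfl).stronglyMeasurable.aestronglyMeasurable) ?_
    filter_upwards [u_bound μ hy0 hrec] with ω hub
    have hk : (0:ℝ) ≤ (k:ℝ) := Nat.cast_nonneg k
    rcases phi_cases (a := a) (b := b) k s ω with hp | hp
    · rw [hhdef]; simp only [hp, zero_mul, norm_zero]
      linarith [hy0 s ω]
    · have hc : Bp a b (s + 1) ω ≤ (k:ℝ) := by
        by_contra hcon; simp [phi, hcon] at hp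
      have hbA := bA_le (a := a) ha0 hb0 hc
      have huA := uA_le ha0 hy0 (hub s)
      have hbA0 : 0 ≤ b s ω / A a (s + 1) ω :=
        div_nonneg (hb0 s ω) (A_pos ha0 (s+1) ω).le
      have huA0 : 0 ≤ u s ω / A a (s + 1) ω :=
        div_nonneg (hu0 s ω) (A_pos ha0 (s+1) ω).le
      have hz2 := Z_nonneg hy0 ha0 s (ω := ω)
      have hz2' := Z_le hy0 ha0 s ω
      rw [hhdef]
      simp only [hp, one_mul, Real.norm_eq_abs, abs_le]
      constructor <;> nlinarith [hy0 s ω]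
  have e1 : μ[X' a b u y k (s + 1) | ℱ s]
      =ᵐ[μ] μ[X' a b u y k s | ℱ s] + (μ[g * y (s + 1) | ℱ s] + μ[h | ℱ s]) := by
    rw [hdec]
    refine (condExp_add (intX' s) (int_gy.add int_h) _).trans ?_
    exact EventuallyEq.add EventuallyEq.rfl (condExp_add int_gy int_h _)
  have e2 : μ[X' a b u y k s | ℱ s] = X' a b u y k s :=
    condExp_of_stronglyMeasurable (ℱ.le s) (X'_meas ha hb hu hy).stronglyMeasurable (intX' s)
  have e3 : μ[h | ℱ s] = h :=
    condExp_of_stronglyMeasurable (ℱ.le s) (hh_meas.stronglyMeasurable) int_h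
  have e4 : μ[g * y (s + 1) | ℱ s] =ᵐ[μ] g * μ[y (s + 1) | ℱ s] :=
    condExp_mul_of_stronglyMeasurable_left hg_meas.stronglyMeasurable int_gy (hyint (s + 1))
  filter_upwards [e1, e4, hrec s] with ω h1 h4 hr
  rw [h1, e2, e3, Pi.add_apply, Pi.add_apply, h4, Pi.mul_apply]
  have hkey : g ω * ((1 + a s ω) * y s ω - u s ω + b s ω) + h ω = 0 := by
    rcases phi_cases (a := a) (b := b) k s ω with hp | hp
    · rw [hgdef, hhdef]; simp [hp]
    · have hP : A a (s + 1) ω ≠ 0 := (A_pos ha0 (s + 1) ω).ne'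
      have hQ : A a s ω ≠ 0 := (A_pos ha0 s ω).ne'
      have hone : (1:ℝ) + a s ω ≠ 0 := by have := ha0 s ω; intro hcon; linarith
      have hZ : Z a y s ω = y s ω / A a s ω := rfl
      have hA : A a (s + 1) ω = A a s ω * (1 + a s ω) := A_succ s ω
      rw [hgdef, hhdef]
      simp only [hp, one_mul]
      rw [hZ, hA]
      field_simp
      ring
  have hmul : g ω * (μ[y (s + 1) | ℱ s]) ω ≤ g ω * ((1 + a s ω) * y s ω - u s ω + b s ω) :=
    mul_le_mul_of_nonneg_left hr (hg01 ω).1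
  linarith

include hy hu ha hb hy0 hu0 ha0 hb0 hyint hrec in
lemma key (k : ℕ) : ∀ᵐ ω ∂μ, (∀ s, Bp a b s ω ≤ (k : ℝ)) →
    ∃ l, Filter.Tendsto (fun s => X a b u y s ω) Filter.atTop (nhds l) := by
  have intX' := fun s => int_X' μ hy hu ha hb hy0 hu0 ha0 hb0 hyint hrec k s
  have Su := superm μ hy hu ha hb hy0 hu0 ha0 hb0 hyint hrec k
  have hlow : ∀ s ω, -(k : ℝ) ≤ X' a b u y k s ω :=
    fun s ω => (stopped hy0 hu0 ha0 hb0 k s ω).2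
  have hX'0 : X' a b u y k 0 = y 0 := by funext ω; simp [X']
  have hImono : ∀ s, ∫ ω, X' a b u y k s ω ∂μ ≤ ∫ ω, y 0 ω ∂μ := by
    intro s
    have h := Su.2.1 0 s (Nat.zero_le s)
    calc ∫ ω, X' a b u y k s ω ∂μ
        = ∫ ω, (μ[X' a b u y k s | ℱ 0]) ω ∂μ := (integral_condExp (ℱ.le 0)).symm
      _ ≤ ∫ ω, X' a b u y k 0 ω ∂μ := integral_mono_ae integrable_condExp (intX' 0) h
      _ = ∫ ω, y 0 ω ∂μ := by rw [hX'0]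
  set R : NNReal := (∫ ω, y 0 ω ∂μ + 2 * (k : ℝ)).toNNReal with hRdef
  have hbdd : ∀ n, eLpNorm ((-(X' a b u y k)) n) 1 μ ≤ (R : ENNReal) := by
    intro n
    have hint := intX' n
    have h1 : eLpNorm ((-(X' a b u y k)) n) 1 μ = ENNReal.ofReal (∫ ω, ‖X' a b u y k n ω‖ ∂μ) := by
      have : (-(X' a b u y k)) n = -(X' a b u y k n) := rfl
      rw [this, eLpNorm_neg, eLpNorm_one_eq_lintegral_enorm,
        ofReal_integral_norm_eq_lintegral_enorm hint]
    rw [h1]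
    have h2 : ∫ ω, ‖X' a b u y k n ω‖ ∂μ ≤ ∫ ω, (X' a b u y k n ω + 2 * (k : ℝ)) ∂μ := by
      refine integral_mono hint.norm (hint.add (integrable_const _)) fun ω => ?_
      have h3 := hlow n ω
      rw [Real.norm_eq_abs, abs_le]
      constructor <;> [linarith [Nat.cast_nonneg (α := ℝ) k]; linarith]
    have h4 : ∫ ω, (X' a b u y k n ω + 2 * (k : ℝ)) ∂μ
        = ∫ ω, X' a b u y k n ω ∂μ + 2 * (k : ℝ) := by
      rw [integral_add hint (integrable_const _), integral_const]
      simp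
    have h5 : ∫ ω, ‖X' a b u y k n ω‖ ∂μ ≤ ∫ ω, y 0 ω ∂μ + 2 * (k : ℝ) := by
      have := hImono n; linarith
    exact le_trans (ENNReal.ofReal_le_ofReal h5) (le_of_eq rfl)
  have conv := Su.neg.exists_ae_tendsto_of_bdd hbdd
  filter_upwards [conv] with ω hω hB
  obtain ⟨c, hc⟩ := hω
  have hc' : Filter.Tendsto (fun n => X' a b u y k n ω) Filter.atTop (nhds (-c)) := by
    have := hc.neg
    simp only [Pi.neg_apply, neg_neg] at this
    exact this
  exact ⟨-c, hc'.congr fun s => (stopped hy0 hu0 ha0 hb0 k s ω).1 (hB s)⟩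

end prob

end RS

open RS in
theorem stmt_5 {Ω : Type*} {m0 : MeasurableSpace Ω} (μ : Measure Ω)
    [IsProbabilityMeasure μ] (ℱ : Filtration ℕ m0)
    (y u a b : ℕ → Ω → ℝ)
    (hy : Adapted ℱ y) (hu : Adapted ℱ u) (ha : Adapted ℱ a) (hb : Adapted ℱ b)
    (hy0 : ∀ s ω, 0 ≤ y s ω) (hu0 : ∀ s ω, 0 ≤ u s ω)
    (ha0 : ∀ s ω, 0 ≤ a s ω) (hb0 : ∀ s ω, 0 ≤ b s ω)
    (hyint : ∀ s, Integrable (y s) μ)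
    (haS : ∀ᵐ ω ∂μ, Summable fun s => a s ω)
    (hbS : ∀ᵐ ω ∂μ, Summable fun s => b s ω)
    (hrec : ∀ s, μ[y (s+1) | ℱ s]
      ≤ᵐ[μ] fun ω => (1 + a s ω) * y s ω - u s ω + b s ω) :
    ∀ᵐ ω ∂μ, (∃ l, Filter.Tendsto (fun s => y s ω) Filter.atTop (nhds l)) ∧
      Summable fun s => u s ω := by
  have hkey : ∀ᵐ ω ∂μ, ∀ k : ℕ, (∀ s, Bp a b s ω ≤ (k : ℝ)) →
      ∃ l, Filter.Tendsto (fun s => X a b u y s ω) Filter.atTop (nhds l) := by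
    rw [MeasureTheory.ae_all_iff]
    exact fun k => key μ hy hu ha hb hy0 hu0 ha0 hb0 hyint hrec k
  filter_upwards [haS, hbS, hkey] with ω Sa Sb hk
  -- Summability of b/A
  have hbA0 : ∀ t, 0 ≤ b t ω / A a (t + 1) ω :=
    fun t => div_nonneg (hb0 t ω) (A_pos ha0 (t + 1) ω).le
  have huA0 : ∀ t, 0 ≤ u t ω / A a (t + 1) ω :=
    fun t => div_nonneg (hu0 t ω) (A_pos ha0 (t + 1) ω).le
  have hbA_sum : Summable fun t => b t ω / A a (t + 1) ω :=
    Summable.of_nonneg_of_le hbA0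
      (fun t => div_le_self (hb0 t ω) (A_one_le ha0 (t + 1) ω)) Sb
  set tB : ℝ := ∑' t, b t ω / A a (t + 1) ω with htB
  have hBle : ∀ s, Bp a b s ω ≤ tB :=
    fun s => hbA_sum.sum_le_tsum (Finset.range s) (fun t _ => hbA0 t)
  set k : ℕ := ⌈tB⌉₊ with hkdef
  obtain ⟨l, hl⟩ := hk k fun s => le_trans (hBle s) (Nat.le_ceil tB)
  have hBtend : Filter.Tendsto (fun s => Bp a b s ω) Filter.atTop (nhds tB) :=
    hbA_sum.hasSum.tendsto_sum_nat
  have hZV : Filter.Tendsto (fun s => Z a y s ω + Bp a u s ω) Filter.atTop (nhds (l + tB)) := by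
    refine (hl.add hBtend).congr fun s => ?_
    unfold X; ring
  obtain ⟨C, hC⟩ := hZV.bddAbove_range
  have hV_sum : Summable fun t => u t ω / A a (t + 1) ω := by
    refine summable_of_sum_range_le (c := C) huA0 fun n => ?_
    have h1 : Bp a u n ω ≤ Z a y n ω + Bp a u n ω := by
      linarith [Z_nonneg hy0 ha0 n (ω := ω)]
    have h2 : Z a y n ω + Bp a u n ω ≤ C := hC (Set.mem_range_self n)
    exact le_trans h1 h2
  have hVtend : Filter.Tendsto (fun s => Bp a u s ω) Filter.atTop
      (nhds (∑' t, u t ω / A a (t + 1) ω)) := hV_sum.hasSum.tendsto_sum_nat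
  set tV : ℝ := ∑' t, u t ω / A a (t + 1) ω
  have hZtend : Filter.Tendsto (fun s => Z a y s ω) Filter.atTop (nhds (l + tB - tV)) := by
    refine (hZV.sub hVtend).congr fun s => ?_
    ring
  -- convergence of A
  have hAbdd : BddAbove (Set.range fun s => A a s ω) := by
    refine ⟨Real.exp (∑' t, a t ω), ?_⟩
    rintro x ⟨s, rfl⟩
    have h1 : A a s ω ≤ ∏ t ∈ Finset.range s, Real.exp (a t ω) := by
      unfold A
      refine Finset.prod_le_prod (fun t _ => ?_) (fun t _ => ?_)
      · have := ha0 t ω; positivity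
      · have := Real.add_one_le_exp (a t ω); linarith
    rw [← Real.exp_sum] at h1
    have h2 : ∑ t ∈ Finset.range s, a t ω ≤ ∑' t, a t ω :=
      Sa.sum_le_tsum (Finset.range s) (fun t _ => ha0 t ω)
    exact le_trans h1 (by exact (Real.exp_le_exp.2 h2))
  set LA : ℝ := ⨆ s, A a s ω with hLA
  have hAtend : Filter.Tendsto (fun s => A a s ω) Filter.atTop (nhds LA) :=
    tendsto_atTop_ciSup (A_mono ha0 ω) hAbdd
  have hALA : ∀ s, A a s ω ≤ LA := fun s => le_ciSup hAbdd s
  constructor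
  · refine ⟨(l + tB - tV) * LA, (hZtend.mul hAtend).congr fun s => ?_⟩
    unfold Z
    exact div_mul_cancel₀ _ (A_pos ha0 s ω).ne'
  · refine Summable.of_nonneg_of_le (fun t => hu0 t ω) (fun t => ?_) (hV_sum.mul_right LA)
    have h1 : u t ω = u t ω / A a (t + 1) ω * A a (t + 1) ω :=
      (div_mul_cancel₀ _ (A_pos ha0 (t + 1) ω).ne').symm
    calc u t ω = u t ω / A a (t + 1) ω * A a (t + 1) ω := h1
      _ ≤ u t ω / A a (t + 1) ω * LA :=
        mul_le_mul_of_nonneg_left (hALA (t + 1)) (huA0 t)
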